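/- Decomposition of abbreviations: for an abbreviation of length at least two (flattened to a symbol string), if its last symbol is a letter then the final functional term of its concatenation is that single letter; otherwise the last symbol is a closing functional bracket, and the final functional term begins at the last letter in the string that is followed by equally many opening and closing functional brackets. -/

import Mathlib

/-- Symbols of the formal language. -/
inductive FSym (L : Type) : Type
  | letter : L → FSym L          -- a letter
  | prop : FSym L                -- property symbol
  | eq : FSym L                  -- equality sign
  | neq : FSym L                 -- inequality sign
  | exOpen : FSym L              -- opening existential bracket [
  | exClose : FSym L             -- closing existential bracket ]
  | allOpen : FSym L             -- opening universal bracket ⟨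
  | allClose : FSym L            -- closing universal bracket ⟩
  | funOpen : FSym L             -- opening functional bracket (
  | funClose : FSym L            -- closing functional bracket )
  deriving DecidableEq

/-- Functional terms: letters, or s(t) for functional terms s and t. -/
inductive FTerm (L : Type) : Type
  | letter : L → FTerm L
  | app : FTerm L → FTerm L → FTerm L
  deriving DecidableEq

/-- Flattening a functional term to its string of symbols. -/
def FTerm.flatten {L : Type} : FTerm L → List (FSym L)
  | .letter a => [FSym.letter a]
  | .app s t => s.flatten ++ FSym.funOpen :: (t.flatten ++ [FSym.funClose])

/-- Is this symbol an opening functional bracket? -/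
def FSym.isFOpen {L : Type} : FSym L → Bool
  | .funOpen => true
  | _ => false

/-- Is this symbol a closing functional bracket? -/
def FSym.isFClose {L : Type} : FSym L → Bool
  | .funClose => true
  | _ => false

/-- Is this symbol a letter? -/
def FSym.isLetter {L : Type} : FSym L → Bool
  | .letter _ => true
  | _ => false

/-- Abbreviations: a single letter, or an abbreviation followed by a functional term. -/
inductive FAbbr (L : Type) : Type
  | letter : L → FAbbr L
  | concat : FAbbr L → FTerm L → FAbbr L
  deriving DecidableEq

/-- Flattening an abbreviation to its string of symbols. -/
def FAbbr.flatten {L : Type} : FAbbr L → List (FSym L)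
  | .letter a => [FSym.letter a]
  | .concat a t => a.flatten ++ t.flatten

/-- A string with equally many opening and closing functional brackets. -/
def fBalanced {L : Type} (l : List (FSym L)) : Prop :=
  l.countP (fun x => x.isFOpen) = l.countP (fun x => x.isFClose)


lemma flatten_head {L : Type} (t : FTerm L) : ∃ x r, t.flatten = FSym.letter x :: r := by
  induction t with
  | letter a => exact ⟨a, [], rfl⟩
  | app s u ihs ihu =>
    obtain ⟨x, r, h⟩ := ihs
    exact ⟨x, r ++ FSym.funOpen :: (u.flatten ++ [FSym.funClose]), by simp [FTerm.flatten, h]⟩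

@[simp] lemma isFOpen_funOpen {L : Type} : (FSym.funOpen : FSym L).isFOpen = true := rfl
@[simp] lemma isFOpen_funClose {L : Type} : (FSym.funClose : FSym L).isFOpen = false := rfl
@[simp] lemma isFOpen_letter {L : Type} (x : L) : (FSym.letter x).isFOpen = false := rfl
@[simp] lemma isFClose_funOpen {L : Type} : (FSym.funOpen : FSym L).isFClose = false := rfl
@[simp] lemma isFClose_funClose {L : Type} : (FSym.funClose : FSym L).isFClose = true := rfl
@[simp] lemma isFClose_letter {L : Type} (x : L) : (FSym.letter x).isFClose = false := rfl

lemma flatten_balanced {L : Type} (t : FTerm L) : fBalanced t.flatten := by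
  induction t with
  | letter a => simp [FTerm.flatten, fBalanced]
  | app s u ihs ihu =>
    unfold fBalanced at *
    simp only [FTerm.flatten, List.countP_append, List.countP_cons, isFOpen_funOpen,
      isFOpen_funClose, isFClose_funOpen, isFClose_funClose, List.countP_nil, Bool.false_eq_true,
      ↓reduceIte]
    omega

lemma flatten_drop_one_balanced {L : Type} (t : FTerm L) : fBalanced (t.flatten.drop 1) := by
  obtain ⟨x, r, h⟩ := flatten_head t
  have hb := flatten_balanced t
  unfold fBalanced at *
  simp [h, List.countP_cons] at hb ⊢
  omega

@[simp] lemma isLetter_funOpen {L : Type} : (FSym.funOpen : FSym L).isLetter = false := rfl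
@[simp] lemma isLetter_funClose {L : Type} : (FSym.funClose : FSym L).isLetter = false := rfl
@[simp] lemma isLetter_letter {L : Type} (x : L) : (FSym.letter x).isLetter = true := rfl

lemma flatten_suffix_unbalanced {L : Type} (t : FTerm L) :
    ∀ j, 1 ≤ j → t.flatten[j]?.any (fun c => c.isLetter) = true →
      (t.flatten.drop (j+1)).countP (fun x => x.isFOpen) <
      (t.flatten.drop (j+1)).countP (fun x => x.isFClose) := by
  induction t with
  | letter a =>
    intro j hj h
    rw [show (FTerm.letter a : FTerm L).flatten = [FSym.letter a] from rfl] at h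
    rw [List.getElem?_eq_none (by simpa using hj)] at h
    simp at h
  | app s u ihs ihu =>
    intro j hj h
    rw [show (FTerm.app s u).flatten
        = s.flatten ++ FSym.funOpen :: (u.flatten ++ [FSym.funClose]) from rfl] at h ⊢
    set ls := s.flatten with hls
    set lu := u.flatten with hlu
    rcases lt_trichotomy j ls.length with hj1 | hj1 | hj1
    · -- inside s
      rw [List.getElem?_append, if_pos hj1] at h
      rw [List.drop_append_of_le_length (by omega)]
      have hs := ihs j hj h
      have hbu := flatten_balanced u
      unfold fBalanced at hbu
      rw [← hlu] at hbu
      simp [List.countP_append, List.countP_cons]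
      omega
    · -- exactly the funOpen
      rw [List.getElem?_append_right hj1.ge, hj1, Nat.sub_self] at h
      simp at h
    · -- inside funOpen :: (lu ++ [funClose])
      rw [List.getElem?_append_right (by omega)] at h
      obtain ⟨i, hi⟩ : ∃ i, j = ls.length + 1 + i := ⟨j - ls.length - 1, by omega⟩
      rw [hi] at h ⊢
      rw [show ls.length + 1 + i - ls.length = i + 1 by omega] at h
      rw [List.getElem?_cons_succ] at h
      rw [show ls.length + 1 + i + 1 = ls.length + (i + 2) by omega, List.drop_length_add_append,
        List.drop_succ_cons]
      rcases lt_trichotomy i lu.length with hi1 | hi1 | hi1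
      · rw [List.getElem?_append, if_pos hi1] at h
        rw [List.drop_append_of_le_length (by omega)]
        simp [List.countP_append, List.countP_cons]
        rcases Nat.eq_zero_or_pos i with hi0 | hi0
        · subst hi0
          have h2 := flatten_drop_one_balanced u
          unfold fBalanced at h2
          rw [← hlu] at h2
          simp only [Nat.zero_add]
          omega
        · have h2 := ihu i hi0 h
          omega
      · rw [List.getElem?_append_right hi1.ge, hi1, Nat.sub_self] at h
        simp at h
      · rw [List.getElem?_eq_none (by simp; omega)] at h
        simp at h

lemma flatten_ne_nil {L : Type} (t : FTerm L) : t.flatten ≠ [] := by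
  obtain ⟨x, r, h⟩ := flatten_head t; simp [h]

lemma getLast?_concat_flatten {L : Type} (a : FAbbr L) (t : FTerm L) :
    ((FAbbr.concat a t).flatten).getLast? = t.flatten.getLast? := by
  rw [show (FAbbr.concat a t).flatten = a.flatten ++ t.flatten from rfl, List.getLast?_append]
  cases h : t.flatten.getLast? with
  | none => exact absurd (List.getLast?_eq_none_iff.mp h) (flatten_ne_nil t)
  | some y => simp

lemma getLast?_app {L : Type} (s u : FTerm L) :
    ((FTerm.app s u).flatten).getLast? = some FSym.funClose := by
  rw [show (FTerm.app s u).flatten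
      = (s.flatten ++ FSym.funOpen :: u.flatten) ++ [FSym.funClose] by simp [FTerm.flatten]]
  exact List.getLast?_concat

theorem abbreviation_decomposition (L : Type) (a : FAbbr L) (t : FTerm L) :
    -- if the last symbol is a letter, the final functional term is that single letter
    (∀ x : L, ((FAbbr.concat a t).flatten).getLast? = some (FSym.letter x) →
      t = FTerm.letter x) ∧
    -- otherwise the last symbol is a closing functional bracket, and the final
    -- functional term begins at the last letter of the string which is followed
    -- by equally many opening and closing functional brackets
    ((∀ x : L, ((FAbbr.concat a t).flatten).getLast? ≠ some (FSym.letter x)) →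
      ((FAbbr.concat a t).flatten).getLast? = some FSym.funClose ∧
      (((FAbbr.concat a t).flatten)[a.flatten.length]?.any
        (fun c => c.isLetter) = true ∧
        fBalanced (((FAbbr.concat a t).flatten).drop (a.flatten.length + 1)) ∧
        ∀ m : ℕ, a.flatten.length < m →
          ((FAbbr.concat a t).flatten)[m]?.any (fun c => c.isLetter) = true →
          ¬ fBalanced (((FAbbr.concat a t).flatten).drop (m + 1)))) := by
  have hflat : (FAbbr.concat a t).flatten = a.flatten ++ t.flatten := rfl
  constructor
  · intro x hx
    rw [getLast?_concat_flatten] at hx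
    cases t with
    | letter y =>
      rw [show (FTerm.letter y : FTerm L).flatten = [FSym.letter y] from rfl] at hx
      simp at hx
      rw [hx]
    | app s u => rw [getLast?_app] at hx; simp at hx
  · intro H
    cases t with
    | letter y =>
      exact absurd (by rw [getLast?_concat_flatten]; rfl) (H y)
    | app s u =>
      refine ⟨by rw [getLast?_concat_flatten, getLast?_app], ?_, ?_, ?_⟩
      · rw [hflat, List.getElem?_append_right le_rfl, Nat.sub_self]
        obtain ⟨x, r, h⟩ := flatten_head (FTerm.app s u)
        rw [h]; simp
      · rw [hflat, show a.flatten.length + 1 = a.flatten.length + 1 from rfl, List.drop_length_add_append]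
        exact flatten_drop_one_balanced _
      · intro m hm hlet hbal
        rw [hflat] at hlet hbal
        obtain ⟨j, hj⟩ : ∃ j, m = a.flatten.length + j := ⟨m - a.flatten.length, by omega⟩
        have hj1 : 1 ≤ j := by omega
        rw [hj, List.getElem?_append_right (by omega),
          show a.flatten.length + j - a.flatten.length = j by omega] at hlet
        rw [hj, show a.flatten.length + j + 1 = a.flatten.length + (j + 1) by omega,
          List.drop_length_add_append] at hbal
        have := flatten_suffix_unbalanced _ j hj1 hlet
        unfold fBalanced at hbal
        omega
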